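/- Let N ≥ 1 be an integer, 1 < p < q, and let v be a radial Neumann solution with exponent q. Then for every r ∈ [0,1] one has v(r) ≤ (q/p)^{1/(q−p)} and v'(r) ≤ ((q−p)/(q(p−1)))^{1/p}. -/

import Mathlib

open Real Set Filter intervalIntegral Topology

def IsRadialNeumannSol (N : ℕ) (p q : ℝ) (v v' : ℝ → ℝ) : Prop :=
  (∀ r ∈ Set.Icc (0:ℝ) 1, HasDerivWithinAt v (v' r) (Set.Icc (0:ℝ) 1) r) ∧
  ContinuousOn v' (Set.Icc (0:ℝ) 1) ∧
  (∀ r ∈ Set.Icc (0:ℝ) 1, 0 < v r) ∧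
  MonotoneOn v (Set.Icc (0:ℝ) 1) ∧
  (∀ r ∈ Set.Icc (0:ℝ) 1, 0 ≤ v' r) ∧
  v' 0 = 0 ∧ v' 1 = 0 ∧
  (∀ r ∈ Set.Ioo (0:ℝ) 1,
    HasDerivAt (fun s => s ^ (N - 1) * v' s ^ (p - 1))
      (r ^ (N - 1) * (v r ^ (p - 1) - v r ^ (q - 1))) r)

private lemma young_aux {p q t : ℝ} (hp : 0 < p) (hpq : p < q) (ht : 0 ≤ t) :
    t ^ p / p - t ^ q / q ≤ (q - p) / (p * q) := by
  have hq : 0 < q := hp.trans hpq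
  have key : t ^ p ≤ p / q * t ^ q + (q - p) / q := by
    have h := Real.geom_mean_le_arith_mean2_weighted
      (by positivity : (0:ℝ) ≤ p / q)
      (show (0:ℝ) ≤ (q-p)/q from div_nonneg (by linarith) hq.le)
      (Real.rpow_nonneg ht q) (zero_le_one) (by field_simp; ring)
    rw [Real.one_rpow, mul_one, mul_one, ← Real.rpow_mul ht] at h
    rw [show q * (p / q) = p by field_simp] at h
    exact h
  have key' : t ^ p * q ≤ p * t ^ q + (q - p) := by
    calc t ^ p * q ≤ (p/q * t^q + (q-p)/q) * q := mul_le_mul_of_nonneg_right key hq.le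
    _ = p * t ^ q + (q - p) := by field_simp
  rw [div_sub_div _ _ hp.ne' hq.ne', div_le_div_iff₀ (by positivity) (by positivity)]
  nlinarith [mul_le_mul_of_nonneg_right
    (by linarith : t ^ p * q - p * t ^ q ≤ q - p) (mul_pos hp hq).le]

private lemma aux_alg (n : ℕ) (r A B : ℝ) (hr : r ≠ 0) :
    (r ^ n * A) * (r ^ n)⁻¹ + (r ^ n * B) * (-((n:ℝ) * r ^ (n-1)) / ((r ^ n)^2)) =
      A - (n:ℝ)/r * B := by
  obtain _ | m := n
  · simp
  · have hsub : m + 1 - 1 = m := rfl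
    rw [hsub]
    field_simp
    ring

theorem apriori_C1_bounds
    (N : ℕ) (hN : 1 ≤ N) (p q : ℝ) (hp : 1 < p) (hpq : p < q)
    (v v' : ℝ → ℝ) (hsol : IsRadialNeumannSol N p q v v') :
    ∀ r ∈ Set.Icc (0:ℝ) 1,
      v r ≤ (q / p) ^ (1 / (q - p)) ∧
      v' r ≤ ((q - p) / (q * (p - 1))) ^ (1 / p) := by
  obtain ⟨hv, hv'c, hvpos, hvmono, hv'nn, hv'0, hv'1, hW⟩ := hsol
  have hp0 : (0:ℝ) < p := lt_trans zero_lt_one hp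
  have hq0 : (0:ℝ) < q := hp0.trans hpq
  have hp1 : (0:ℝ) < p - 1 := sub_pos.mpr hp
  have hqp : (0:ℝ) < q - p := sub_pos.mpr hpq
  have h0I : (0:ℝ) ∈ Icc (0:ℝ) 1 := ⟨le_refl 0, zero_le_one⟩
  have h1I : (1:ℝ) ∈ Icc (0:ℝ) 1 := ⟨zero_le_one, le_refl 1⟩
  have hα : (1:ℝ) ≤ p / (p-1) := by rw [le_div_iff₀ hp1]; linarith
  have hα0 : (0:ℝ) < p / (p-1) := by positivity
  have hvcont : ContinuousOn v (Icc (0:ℝ) 1) := fun r hr => (hv r hr).continuousWithinAt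
  have hgcont : ContinuousOn (fun s => v' s ^ (p-1)) (Icc (0:ℝ) 1) :=
    hv'c.rpow_const (fun x _ => Or.inr hp1.le)
  have hg0 : v' 0 ^ (p-1) = 0 := by rw [hv'0, Real.zero_rpow hp1.ne']
  have hg1 : v' 1 ^ (p-1) = 0 := by rw [hv'1, Real.zero_rpow hp1.ne']
  -- derivative of g := v'^(p-1) on Ioo
  have hgderiv : ∀ r ∈ Ioo (0:ℝ) 1,
      HasDerivAt (fun s => v' s ^ (p-1))
        (v r ^ (p-1) - v r ^ (q-1) - ((N-1 : ℕ):ℝ)/r * v' r ^ (p-1)) r := by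
    intro r hr
    have hr0 : 0 < r := hr.1
    have hpow : HasDerivAt (fun s : ℝ => ((s:ℝ) ^ (N-1))⁻¹)
        (-(((N-1:ℕ):ℝ) * r ^ ((N-1) - 1)) / ((r ^ (N-1))^2)) r :=
      (hasDerivAt_pow (N-1) r).inv (pow_ne_zero _ hr0.ne')
    have hmul := (hW r hr).mul hpow
    have heq : (fun s => (s ^ (N-1) * v' s ^ (p-1)) * ((s:ℝ) ^ (N-1))⁻¹)
        =ᶠ[𝓝 r] fun s => v' s ^ (p-1) := by
      filter_upwards [eventually_gt_nhds hr0] with s hs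
      field_simp
    have h2 := hmul.congr_of_eventuallyEq heq.symm
    exact h2.congr_deriv (aux_alg (N-1) r _ _ hr0.ne')
  -- the energy E and its derivative
  have hEderiv : ∀ r ∈ Ioo (0:ℝ) 1,
      HasDerivAt (fun s => (p-1)/p * (v' s ^ (p-1)) ^ (p/(p-1)) - v s ^ p / p + v s ^ q / q)
        (-(((N-1:ℕ):ℝ)/r) * v' r ^ p) r := by
    intro r hr
    have hrIcc : r ∈ Icc (0:ℝ) 1 := Ioo_subset_Icc_self hr
    have hx : 0 ≤ v' r := hv'nn r hrIcc
    have hvr : HasDerivAt v (v' r) r :=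
      (hv r hrIcc).hasDerivAt (Icc_mem_nhds hr.1 hr.2)
    have h1 := (hgderiv r hr).rpow_const (Or.inr hα)
    have h2 : HasDerivAt (fun s => v s ^ p) (v' r * p * v r ^ (p - 1)) r :=
      hvr.rpow_const (Or.inl (hvpos r hrIcc).ne')
    have h3 : HasDerivAt (fun s => v s ^ q) (v' r * q * v r ^ (q - 1)) r :=
      hvr.rpow_const (Or.inl (hvpos r hrIcc).ne')
    have hsum := ((h1.const_mul ((p-1)/p)).sub (h2.div_const p)).add (h3.div_const q)
    refine hsum.congr_deriv ?_
    -- algebra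
    have e1 : (v' r ^ (p-1)) ^ (p/(p-1) - 1) = v' r := by
      rw [← Real.rpow_mul hx, show (p-1) * (p/(p-1) - 1) = 1 by field_simp; ring,
        Real.rpow_one]
    have e2 : v' r ^ p = v' r ^ (p-1) * v' r := by
      nth_rewrite 1 [show p = (p-1) + 1 by ring]
      rw [Real.rpow_add' hx (by rw [sub_add_cancel]; exact hp0.ne'), Real.rpow_one]
    rw [e1, e2]
    field_simp
    ring
  -- E is antitone on [0,1]
  have hEcont : ContinuousOn
      (fun s => (p-1)/p * (v' s ^ (p-1)) ^ (p/(p-1)) - v s ^ p / p + v s ^ q / q)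
      (Icc (0:ℝ) 1) := by
    apply ContinuousOn.add
    apply ContinuousOn.sub
    · exact (hgcont.rpow_const (fun x _ => Or.inr hα0.le)).const_smul ((p-1)/p) |>.congr (fun x _ => by simp [smul_eq_mul])
    · exact (hvcont.rpow_const (fun x hx => Or.inl (hvpos x hx).ne')).div_const p
    · exact (hvcont.rpow_const (fun x hx => Or.inl (hvpos x hx).ne')).div_const q
  have hEanti : AntitoneOn
      (fun s => (p-1)/p * (v' s ^ (p-1)) ^ (p/(p-1)) - v s ^ p / p + v s ^ q / q)
      (Icc (0:ℝ) 1) := by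
    apply antitoneOn_of_deriv_nonpos (convex_Icc 0 1) hEcont
    · rw [interior_Icc]
      exact fun x hx => (hEderiv x hx).differentiableAt.differentiableWithinAt
    · rw [interior_Icc]
      intro x hx
      rw [(hEderiv x hx).deriv]
      have : 0 ≤ (((N-1:ℕ):ℝ)/x) * v' x ^ p :=
        mul_nonneg (div_nonneg (Nat.cast_nonneg _) hx.1.le)
          (Real.rpow_nonneg (hv'nn x (Ioo_subset_Icc_self hx)) p)
      linarith
  -- v 0 ≤ 1
  have hv01 : v 0 ≤ 1 := by
    by_contra hcon
    push_neg at hcon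
    have hvgt : ∀ x ∈ Icc (0:ℝ) 1, 1 < v x := fun x hx =>
      lt_of_lt_of_le hcon (hvmono h0I hx hx.1)
    have hWcont : ContinuousOn (fun s : ℝ => s ^ (N-1) * v' s ^ (p-1)) (Icc (0:ℝ) 1) :=
      (continuous_pow (N-1)).continuousOn.mul hgcont
    have hWanti : AntitoneOn (fun s : ℝ => s ^ (N-1) * v' s ^ (p-1)) (Icc (0:ℝ) 1) := by
      apply antitoneOn_of_deriv_nonpos (convex_Icc 0 1) hWcont
      · rw [interior_Icc]
        exact fun x hx => (hW x hx).differentiableAt.differentiableWithinAt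
      · rw [interior_Icc]
        intro x hx
        rw [(hW x hx).deriv]
        have h1 : v x ^ (p-1) ≤ v x ^ (q-1) :=
          Real.rpow_le_rpow_of_exponent_le (hvgt x (Ioo_subset_Icc_self hx)).le
            (by linarith)
        have h2 : (0:ℝ) ≤ x ^ (N-1) := pow_nonneg hx.1.le _
        nlinarith
    have hWzero : ∀ x ∈ Icc (0:ℝ) 1, x ^ (N-1) * v' x ^ (p-1) = 0 := by
      intro x hx
      have hle : x ^ (N-1) * v' x ^ (p-1) ≤ 0 ^ (N-1) * v' 0 ^ (p-1) :=
        hWanti h0I hx hx.1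
      have hge : (1:ℝ) ^ (N-1) * v' 1 ^ (p-1) ≤ x ^ (N-1) * v' x ^ (p-1) :=
        hWanti hx h1I hx.2
      rw [hg0, mul_zero] at hle
      rw [hg1, mul_zero] at hge
      linarith
    have hc : (1/2 : ℝ) ∈ Ioo (0:ℝ) 1 := by norm_num
    have hWc := hW (1/2) hc
    have hzero : HasDerivAt (fun s : ℝ => s ^ (N-1) * v' s ^ (p-1)) 0 (1/2 : ℝ) := by
      have heq : (fun s : ℝ => s ^ (N-1) * v' s ^ (p-1)) =ᶠ[𝓝 (1/2:ℝ)] fun _ => (0:ℝ) := by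
        filter_upwards [Ioo_mem_nhds hc.1 hc.2] with s hs
        exact hWzero s (Ioo_subset_Icc_self hs)
      exact (hasDerivAt_const _ (0:ℝ)).congr_of_eventuallyEq heq
    have huniq := hWc.unique hzero
    have hlt : v (1/2) ^ (p-1) < v (1/2) ^ (q-1) :=
      Real.rpow_lt_rpow_of_exponent_lt (hvgt (1/2) (Ioo_subset_Icc_self hc)) (by linarith)
    have hpos : (0:ℝ) < (1/2:ℝ) ^ (N-1) := by positivity
    nlinarith
  -- F(v 0) ≥ 0
  have hF0 : 0 ≤ v 0 ^ p / p - v 0 ^ q / q := by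
    have h1 : v 0 ^ q ≤ v 0 ^ p :=
      Real.rpow_le_rpow_of_exponent_ge (hvpos 0 h0I) hv01 hpq.le
    have h2 : v 0 ^ q / q ≤ v 0 ^ p / p := by
      gcongr
      exact Real.rpow_nonneg (hvpos 0 h0I).le p
    linarith
  intro r hr
  have hvr1 : v r ≤ v 1 := hvmono hr h1I hr.2
  have hv1pos : 0 < v 1 := hvpos 1 h1I
  constructor
  · -- bound on v
    have hE10 := hEanti h0I h1I zero_le_one
    simp only [hg0, hg1, Real.zero_rpow hα0.ne', mul_zero] at hE10
    -- hE10 : (p-1)/p * 0 - v 1 ^ p / p + v 1 ^ q / q ≤ (p-1)/p * 0 - v 0 ^ p / p + v 0 ^ q / q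
    have hF1 : v 1 ^ q / q ≤ v 1 ^ p / p := by linarith
    have hqple : v 1 ^ (q - p) ≤ q / p := by
      rw [Real.rpow_sub hv1pos, div_le_div_iff₀ (Real.rpow_pos_of_pos hv1pos p) hp0]
      have := mul_le_mul_of_nonneg_left hF1 (mul_pos hp0 hq0).le
      calc v 1 ^ q * p = (p * q) * (v 1 ^ q / q) := by field_simp
        _ ≤ (p * q) * (v 1 ^ p / p) := by
            exact mul_le_mul_of_nonneg_left hF1 (mul_pos hp0 hq0).le
        _ = q * v 1 ^ p := by field_simp
    calc v r ≤ v 1 := hvr1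
      _ = (v 1 ^ (q-p)) ^ (1/(q-p)) := by
          rw [← Real.rpow_mul hv1pos.le, mul_one_div, div_self hqp.ne', Real.rpow_one]
      _ ≤ (q/p) ^ (1/(q-p)) :=
          Real.rpow_le_rpow (Real.rpow_nonneg hv1pos.le _) hqple (by positivity)
  · -- bound on v'
    have hEr0 := hEanti h0I hr hr.1
    simp only [hg0, Real.zero_rpow hα0.ne', mul_zero] at hEr0
    have hgα : (v' r ^ (p-1)) ^ (p/(p-1)) = v' r ^ p := by
      rw [← Real.rpow_mul (hv'nn r hr), show (p-1) * (p/(p-1)) = p by field_simp]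
    rw [hgα] at hEr0
    have hyoung := young_aux hp0 hpq (hvpos r hr).le
    have hkey : (p-1)/p * v' r ^ p ≤ (q-p)/(p*q) := by linarith
    have hfin : v' r ^ p ≤ (q-p)/(q*(p-1)) := by
      rw [le_div_iff₀ (by positivity)]
      rw [div_mul_eq_mul_div, div_le_div_iff₀ hp0 (by positivity)] at hkey
      nlinarith [hkey]
    calc v' r = (v' r ^ p) ^ (1/p) := by
          rw [← Real.rpow_mul (hv'nn r hr), mul_one_div, div_self hp0.ne', Real.rpow_one]
      _ ≤ ((q-p)/(q*(p-1))) ^ (1/p) :=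
          Real.rpow_le_rpow (Real.rpow_nonneg (hv'nn r hr) p) hfin (by positivity)
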